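/- arXiv:1005.2951 — 8 statements merged into one kernel-verified Lean document; each statement's English description precedes it below -/
import Mathlib

section
/- For every positive integer k, I_{k,k} = (−1)ᵏ · k! · (q_{3k−1} e − p_{3k−1}), where I_{k,k} := ∫₀¹ xᵏ (1-x)ᵏ eˣ dx and p_n/q_n is the n-th convergent of the continued fraction [2; 1, 2, 1, 1, 4, 1, 1, 6, 1, ...]. -/
open intervalIntegral MeasureTheory

noncomputable def Jx (a b : ℕ) : ℝ := ∫ x in (0:ℝ)..1, x^a * (x-1)^b * Real.exp x

lemma Jint (a b : ℕ) : IntervalIntegrable (fun x : ℝ => x^a * (x-1)^b * Real.exp x) volume 0 1 := by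
  apply Continuous.intervalIntegrable; fun_prop

lemma hderiv (a b : ℕ) (x : ℝ) : HasDerivAt (fun y : ℝ => y^(a+1) * (y-1)^(b+1) * Real.exp y)
    (((a+1 : ℝ) * x^a * (x-1)^(b+1) + (b+1) * x^(a+1) * (x-1)^b) * Real.exp x
      + x^(a+1) * (x-1)^(b+1) * Real.exp x) x := by
  have h1 : HasDerivAt (fun y : ℝ => y^(a+1)) ((a+1 : ℝ) * x^a) x := by
    simpa using hasDerivAt_pow (a+1) x
  have h2 : HasDerivAt (fun y : ℝ => (y-1)^(b+1)) ((b+1 : ℝ) * (x-1)^b) x := by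
    have := (hasDerivAt_pow (b+1) (x-1)).comp x ((hasDerivAt_id x).sub_const 1)
    simpa [Function.comp_def] using this
  have := (h1.mul h2).mul (Real.hasDerivAt_exp x)
  refine this.congr_deriv ?_
  simp only [Pi.mul_apply]
  ring

lemma Jrel (a b : ℕ) :
    (a+1 : ℝ) * Jx a (b+1) + (b+1 : ℝ) * Jx (a+1) b + Jx (a+1) (b+1) = 0 := by
  have key : ∫ x in (0:ℝ)..1,
      (((a+1 : ℝ) * x^a * (x-1)^(b+1) + (b+1) * x^(a+1) * (x-1)^b) * Real.exp x
        + x^(a+1) * (x-1)^(b+1) * Real.exp x) = 0 := by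
    rw [intervalIntegral.integral_eq_sub_of_hasDerivAt (fun x _ => hderiv a b x)
      (by apply Continuous.intervalIntegrable; fun_prop)]
    simp
  have split : ∫ x in (0:ℝ)..1,
      (((a+1 : ℝ) * x^a * (x-1)^(b+1) + (b+1) * x^(a+1) * (x-1)^b) * Real.exp x
        + x^(a+1) * (x-1)^(b+1) * Real.exp x)
      = (a+1 : ℝ) * Jx a (b+1) + (b+1 : ℝ) * Jx (a+1) b + Jx (a+1) (b+1) := by
    have : ∀ x : ℝ, ((a+1 : ℝ) * x^a * (x-1)^(b+1) + (b+1) * x^(a+1) * (x-1)^b) * Real.exp x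
        + x^(a+1) * (x-1)^(b+1) * Real.exp x
        = (a+1 : ℝ) * (x^a * (x-1)^(b+1) * Real.exp x)
          + ((b+1 : ℝ) * (x^(a+1) * (x-1)^b * Real.exp x)
          + x^(a+1) * (x-1)^(b+1) * Real.exp x) := by intro x; ring
    rw [intervalIntegral.integral_congr (fun x _ => this x)]
    rw [intervalIntegral.integral_add (by apply Continuous.intervalIntegrable; fun_prop)
        (by apply Continuous.intervalIntegrable; fun_prop),
      intervalIntegral.integral_add (by apply Continuous.intervalIntegrable; fun_prop)
        (by apply Continuous.intervalIntegrable; fun_prop),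
      intervalIntegral.integral_const_mul, intervalIntegral.integral_const_mul]
    simp [Jx]
    ring
  rw [← split, key]

lemma JC (j : ℕ) : Jx j (j+1) = Jx (j+1) j - Jx j j := by
  rw [Jx, Jx, Jx, ← intervalIntegral.integral_sub (Jint _ _) (Jint _ _)]
  apply intervalIntegral.integral_congr
  intro x _; ring

lemma JD (j : ℕ) : Jx (j+2) j = Jx (j+1) (j+1) + Jx (j+1) j := by
  rw [Jx, Jx, Jx, ← intervalIntegral.integral_add (Jint _ _) (Jint _ _)]
  apply intervalIntegral.integral_congr
  intro x _; ring

lemma J00 : Jx 0 0 = Real.exp 1 - 1 := by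
  simp [Jx, integral_exp]

lemma J10 : Jx 1 0 = 1 := by
  have hd : ∀ x ∈ Set.uIcc (0:ℝ) 1, HasDerivAt (fun y : ℝ => (y - 1) * Real.exp y)
      (x^1 * (x-1)^0 * Real.exp x) x := by
    intro x _
    have := ((hasDerivAt_id x).sub_const 1).mul (Real.hasDerivAt_exp x)
    refine this.congr_deriv ?_
    simp [id]
    ring
  rw [Jx, intervalIntegral.integral_eq_sub_of_hasDerivAt hd (Jint 1 0)]
  simp

theorem stmt6 (a : ℕ → ℕ) (p q : ℕ → ℤ)
    (ha1 : a 1 = 2)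
    (ha3 : ∀ k : ℕ, 1 ≤ k → a (3 * k) = 2 * k)
    (ha : ∀ k : ℕ, 1 ≤ k → a (3 * k - 1) = 1 ∧ a (3 * k + 1) = 1)
    (hp1 : p 1 = 2) (hp2 : p 2 = 3) (hq1 : q 1 = 1) (hq2 : q 2 = 1)
    (hrec : ∀ n : ℕ, 3 ≤ n →
      p n = a n * p (n - 1) + p (n - 2) ∧ q n = a n * q (n - 1) + q (n - 2))
    (k : ℕ) (hk : 1 ≤ k) :
    (∫ x in (0:ℝ)..1, x ^ k * (1 - x) ^ k * Real.exp x) =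
      (-1 : ℝ) ^ k * (Nat.factorial k) *
        ((q (3 * k - 1) : ℝ) * Real.exp 1 - (p (3 * k - 1) : ℝ)) := by
  have ha3' : a 3 = 2 := by have := ha3 1 le_rfl; simpa using this
  have hp3 : p 3 = 8 := by
    have h := (hrec 3 le_rfl).1
    norm_num [ha3', hp2, hp1] at h
    exact h
  have hq3 : q 3 = 3 := by
    have h := (hrec 3 le_rfl).2
    norm_num [ha3', hq2, hq1] at h
    exact h
  have main : ∀ n : ℕ,
      Jx (n+1) (n+1) = (Nat.factorial (n+1)) *
        ((q (3*n+2) : ℝ) * Real.exp 1 - (p (3*n+2) : ℝ)) ∧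
      Jx (n+2) (n+1) = (Nat.factorial (n+1)) *
        ((p (3*n+3) : ℝ) - (q (3*n+3) : ℝ) * Real.exp 1) := by
    intro n
    induction n with
    | zero =>
      have h1 := Jrel 0 0
      have h2 := JC 0
      have h3 := Jrel 1 0
      have h4 := JD 0
      norm_num at h1 h2 h3 h4 ⊢
      simp only [J00, J10] at h1 h2 h3 h4
      rw [hp2, hq2, hp3, hq3]
      push_cast
      constructor <;> linarith
    | succ n ih =>
      obtain ⟨iA, iB⟩ := ih
      have hA : Jx (n+2) (n+2)
          = ((n:ℝ)+2) * Jx (n+1) (n+1) - 2*((n:ℝ)+2) * Jx (n+2) (n+1) := by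
        have h1 := Jrel (n+1) (n+1)
        have h2 := JC (n+1)
        simp only [show n+1+1 = n+2 from rfl] at h1 h2
        push_cast at h1 h2 ⊢
        linear_combination h1 - ((n:ℝ)+2) * h2
      have hB : Jx (n+3) (n+2)
          = -(2*(n:ℝ)+5) * Jx (n+2) (n+2) - ((n:ℝ)+2) * Jx (n+2) (n+1) := by
        have h1 := Jrel (n+2) (n+1)
        have h2 := JD (n+1)
        simp only [show n+1+1 = n+2 from rfl, show n+2+1 = n+3 from rfl,
          show n+1+2 = n+3 from rfl] at h1 h2
        push_cast at h1 h2 ⊢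
        linear_combination h1 - ((n:ℝ)+2) * h2
      -- p, q identities
      have a4 : a (3*n+4) = 1 := by
        have h := (ha (n+1) (by omega)).2
        rwa [show 3*(n+1)+1 = 3*n+4 from by ring] at h
      have a5 : a (3*n+5) = 1 := by
        have h := (ha (n+2) (by omega)).1
        rwa [show 3*(n+2)-1 = 3*n+5 from by omega] at h
      have a6 : a (3*n+6) = 2*(n+2) := by
        have h := ha3 (n+2) (by omega)
        rwa [show 3*(n+2) = 3*n+6 from by ring] at h
      have h4 := hrec (3*n+4) (by omega)
      have h5 := hrec (3*n+5) (by omega)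
      have h6 := hrec (3*n+6) (by omega)
      rw [show 3*n+4-1 = 3*n+3 from by omega, show 3*n+4-2 = 3*n+2 from by omega, a4] at h4
      rw [show 3*n+5-1 = 3*n+4 from by omega, show 3*n+5-2 = 3*n+3 from by omega, a5] at h5
      rw [show 3*n+6-1 = 3*n+5 from by omega, show 3*n+6-2 = 3*n+4 from by omega, a6] at h6
      have e4p : (p (3*n+4) : ℝ) = p (3*n+3) + p (3*n+2) := by
        rw [h4.1]; push_cast; ring
      have e4q : (q (3*n+4) : ℝ) = q (3*n+3) + q (3*n+2) := by
        rw [h4.2]; push_cast; ring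
      have e5p : (p (3*n+5) : ℝ) = p (3*n+4) + p (3*n+3) := by
        rw [h5.1]; push_cast; ring
      have e5q : (q (3*n+5) : ℝ) = q (3*n+4) + q (3*n+3) := by
        rw [h5.2]; push_cast; ring
      have e6p : (p (3*n+6) : ℝ) = (2*(n:ℝ)+4) * p (3*n+5) + p (3*n+4) := by
        rw [h6.1]; push_cast; ring
      have e6q : (q (3*n+6) : ℝ) = (2*(n:ℝ)+4) * q (3*n+5) + q (3*n+4) := by
        rw [h6.2]; push_cast; ring
      have hfac : (Nat.factorial (n+2) : ℝ) = ((n:ℝ)+2) * Nat.factorial (n+1) := by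
        rw [Nat.factorial_succ]; push_cast; ring
      constructor
      · show Jx (n+2) (n+2) = _
        rw [hA, iA, iB]
        rw [show 3*(n+1)+2 = 3*n+5 from by ring]
        rw [show (n+1+1) = n+2 from rfl, hfac, e5p, e5q, e4p, e4q]
        ring
      · show Jx (n+3) (n+2) = _
        rw [hB, hA, iA, iB]
        rw [show 3*(n+1)+3 = 3*n+6 from by ring]
        rw [show (n+1+1) = n+2 from rfl, hfac, e6p, e6q, e5p, e5q, e4p, e4q]
        ring
  obtain ⟨m, rfl⟩ : ∃ m, k = m + 1 := ⟨k - 1, by omega⟩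
  have hm := (main m).1
  have hI : (∫ x in (0:ℝ)..1, x ^ (m+1) * (1 - x) ^ (m+1) * Real.exp x)
      = (-1:ℝ)^(m+1) * Jx (m+1) (m+1) := by
    rw [Jx, ← intervalIntegral.integral_const_mul]
    apply intervalIntegral.integral_congr
    intro x _
    show x ^ (m+1) * (1 - x) ^ (m+1) * Real.exp x
      = (-1:ℝ) ^ (m+1) * (x ^ (m+1) * (x - 1) ^ (m+1) * Real.exp x)
    rw [show (1 - x : ℝ) = -(x - 1) from by ring]
    rw [neg_pow]
    ring
  rw [hI, hm, show 3*(m+1)-1 = 3*m+2 from by omega]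
  ring
end

section
/- For every natural number k, I_{k,k+1} = (−1)ᵏ · k! · (q_{3k+1} e − p_{3k+1}), where I_{k,k+1} := ∫₀¹ xᵏ (1-x)^{k+1} eˣ dx and p_n/q_n is the n-th convergent of the continued fraction [2; 1, 2, 1, 1, 4, 1, ...]. -/
open intervalIntegral

noncomputable def Jint_s7 (m n : ℕ) : ℝ := ∫ x in (0:ℝ)..1, x ^ m * (1 - x) ^ n * Real.exp x

lemma Jcont (m n : ℕ) : Continuous fun x : ℝ => x ^ m * (1 - x) ^ n * Real.exp x := by
  fun_prop

lemma Jii (m n : ℕ) : IntervalIntegrable (fun x : ℝ => x ^ m * (1 - x) ^ n * Real.exp x)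
    MeasureTheory.volume 0 1 := (Jcont m n).intervalIntegrable 0 1

lemma ftc (m n : ℕ) :
    (∫ x in (0:ℝ)..1, (((m:ℝ)+1) * x ^ m * (1-x) ^ (n+1) - ((n:ℝ)+1) * x ^ (m+1) * (1-x) ^ n
      + x ^ (m+1) * (1-x) ^ (n+1)) * Real.exp x) = 0 := by
  have h : ∀ x ∈ Set.uIcc (0:ℝ) 1,
      HasDerivAt (fun y : ℝ => y ^ (m+1) * (1-y) ^ (n+1) * Real.exp y)
      ((((m:ℝ)+1) * x ^ m * (1-x) ^ (n+1) - ((n:ℝ)+1) * x ^ (m+1) * (1-x) ^ n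
        + x ^ (m+1) * (1-x) ^ (n+1)) * Real.exp x) x := by
    intro x _
    have h1 : HasDerivAt (fun y : ℝ => y ^ (m+1)) (((m:ℝ)+1) * x ^ m) x := by
      simpa using hasDerivAt_pow (m+1) x
    have hb : HasDerivAt (fun y : ℝ => 1 - y) (-1 : ℝ) x := by
      simpa using (hasDerivAt_id x).const_sub 1
    have h2 : HasDerivAt (fun y : ℝ => (1-y) ^ (n+1)) (-(((n:ℝ)+1) * (1-x) ^ n)) x := by
      have := hb.fun_pow (n+1)
      refine this.congr_deriv ?_
      push_cast
      ring
    have h3 := Real.hasDerivAt_exp x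
    have := (h1.fun_mul h2).fun_mul h3
    refine this.congr_deriv ?_
    ring
  have hi : IntervalIntegrable (fun x : ℝ => (((m:ℝ)+1) * x ^ m * (1-x) ^ (n+1)
      - ((n:ℝ)+1) * x ^ (m+1) * (1-x) ^ n + x ^ (m+1) * (1-x) ^ (n+1)) * Real.exp x)
      MeasureTheory.volume 0 1 := by
    apply Continuous.intervalIntegrable
    fun_prop
  rw [intervalIntegral.integral_eq_sub_of_hasDerivAt h hi]
  simp

lemma Jkey (m n : ℕ) :
    ((m:ℝ)+1) * Jint_s7 m (n+1) - ((n:ℝ)+1) * Jint_s7 (m+1) n + Jint_s7 (m+1) (n+1) = 0 := by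
  have e : ((m:ℝ)+1) * Jint_s7 m (n+1) - ((n:ℝ)+1) * Jint_s7 (m+1) n + Jint_s7 (m+1) (n+1) =
      ∫ x in (0:ℝ)..1, (((m:ℝ)+1) * x ^ m * (1-x) ^ (n+1) - ((n:ℝ)+1) * x ^ (m+1) * (1-x) ^ n
        + x ^ (m+1) * (1-x) ^ (n+1)) * Real.exp x := by
    unfold Jint_s7
    rw [← intervalIntegral.integral_const_mul, ← intervalIntegral.integral_const_mul,
      ← intervalIntegral.integral_sub ((Jii m (n+1)).const_mul _) ((Jii (m+1) n).const_mul _),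
      ← intervalIntegral.integral_add (((Jii m (n+1)).const_mul _).sub ((Jii (m+1) n).const_mul _)) (Jii (m+1) (n+1))]
    refine intervalIntegral.integral_congr fun x hx => ?_
    ring
  rw [e, ftc m n]

lemma Jsplit (m n : ℕ) : Jint_s7 m (n+1) = Jint_s7 m n - Jint_s7 (m+1) n := by
  unfold Jint_s7
  rw [← intervalIntegral.integral_sub (Jii m n) (Jii (m+1) n)]
  refine intervalIntegral.integral_congr fun x hx => ?_
  ring

lemma J10_s7 : Jint_s7 1 0 = 1 := by
  have e : Jint_s7 1 0 = ∫ x in (0:ℝ)..1, x * Real.exp x := by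
    unfold Jint_s7
    refine intervalIntegral.integral_congr fun x hx => ?_
    ring
  rw [e]
  have h : ∀ x ∈ Set.uIcc (0:ℝ) 1, HasDerivAt (fun y : ℝ => (y - 1) * Real.exp y)
      (x * Real.exp x) x := by
    intro x _
    have := ((hasDerivAt_id x).sub_const 1).fun_mul (Real.hasDerivAt_exp x)
    simp only [id_eq] at this
    refine this.congr_deriv ?_
    ring
  rw [intervalIntegral.integral_eq_sub_of_hasDerivAt h
    ((by fun_prop : Continuous fun x : ℝ => x * Real.exp x).intervalIntegrable 0 1)]
  simp

lemma J01 : Jint_s7 0 1 = Real.exp 1 - 2 := by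
  have e : Jint_s7 0 1 = ∫ x in (0:ℝ)..1, (1 - x) * Real.exp x := by
    unfold Jint_s7
    refine intervalIntegral.integral_congr fun x hx => ?_
    ring
  rw [e]
  have h : ∀ x ∈ Set.uIcc (0:ℝ) 1, HasDerivAt (fun y : ℝ => (2 - y) * Real.exp y)
      ((1 - x) * Real.exp x) x := by
    intro x _
    have := ((hasDerivAt_id x).const_sub 2).fun_mul (Real.hasDerivAt_exp x)
    simp only [id_eq] at this
    refine this.congr_deriv ?_
    ring
  rw [intervalIntegral.integral_eq_sub_of_hasDerivAt h
    ((by fun_prop : Continuous fun x : ℝ => (1 - x) * Real.exp x).intervalIntegrable 0 1)]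
  simp
  ring

theorem stmt7 (a : ℕ → ℕ) (p q : ℕ → ℤ)
    (ha1 : a 1 = 2)
    (ha3 : ∀ k : ℕ, 1 ≤ k → a (3 * k) = 2 * k)
    (ha : ∀ k : ℕ, 1 ≤ k → a (3 * k - 1) = 1 ∧ a (3 * k + 1) = 1)
    (hp1 : p 1 = 2) (hp2 : p 2 = 3) (hq1 : q 1 = 1) (hq2 : q 2 = 1)
    (hrec : ∀ n : ℕ, 3 ≤ n →
      p n = a n * p (n - 1) + p (n - 2) ∧ q n = a n * q (n - 1) + q (n - 2))
    (k : ℕ) :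
    (∫ x in (0:ℝ)..1, x ^ k * (1 - x) ^ (k + 1) * Real.exp x) =
      (-1 : ℝ) ^ k * (Nat.factorial k) *
        ((q (3 * k + 1) : ℝ) * Real.exp 1 - (p (3 * k + 1) : ℝ)) := by
  suffices h : ∀ k : ℕ,
      Jint_s7 k (k+1) = (-1 : ℝ) ^ k * (Nat.factorial k) *
        ((q (3 * k + 1) : ℝ) * Real.exp 1 - (p (3 * k + 1) : ℝ)) ∧
      (1 ≤ k → Jint_s7 (k+1) k = (-1 : ℝ) ^ (k+1) * (Nat.factorial k) *
        ((q (3 * k) : ℝ) * Real.exp 1 - (p (3 * k) : ℝ))) by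
    exact (h k).1
  intro k
  induction k with
  | zero =>
      refine ⟨?_, by omega⟩
      have : Jint_s7 0 (0+1) = Real.exp 1 - 2 := J01
      rw [this]
      norm_num [hq1, hp1]
  | succ k ih =>
      rcases Nat.eq_zero_or_pos k with hk0 | hk1
      · subst hk0
        -- k+1 = 1 case
        have h1 := Jkey 0 0
        have h2 := Jkey 1 0
        have h3 := Jsplit 1 0
        have h4 := Jsplit 1 1
        norm_num at h1 h2 h3 h4
        have ha3' : a 3 = 2 := by have := ha3 1 le_rfl; norm_num at this; exact this
        have ha4' : a 4 = 1 := by have := (ha 1 le_rfl).2; norm_num at this; exact this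
        obtain ⟨hp3, hq3⟩ := hrec 3 (by norm_num)
        norm_num [ha3', hp2, hp1, hq2, hq1] at hp3 hq3
        obtain ⟨hp4, hq4⟩ := hrec 4 (by norm_num)
        norm_num [ha4', hp3, hq3, hp2, hq2] at hp4 hq4
        have e10 := J10_s7
        have e01 := J01
        constructor
        · show Jint_s7 1 2 = _
          norm_num [hq4, hp4, Nat.factorial]
          linarith [h1, h2, h3, h4, e10, e01]
        · intro _
          show Jint_s7 2 1 = _
          norm_num [hq3, hp3, Nat.factorial]
          linarith [h1, h2, h3, h4, e10, e01]
      · -- general step, k ≥ 1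
        obtain ⟨hC, hBc⟩ := ih
        have hB := hBc hk1
        have hA := Jkey k k
        have hK2 := Jkey (k+1) k
        have hS1 := Jsplit (k+1) k
        have hS2 := Jsplit (k+1) (k+1)
        simp only [show k+1+1 = k+2 by omega] at hK2 hS1 hS2 ⊢
        -- integer recurrences
        have a2 : a (3*k+2) = 1 := by
          have := (ha (k+1) (by omega)).1
          simpa [show 3*(k+1)-1 = 3*k+2 by omega] using this
        have a3' : a (3*k+3) = 2*(k+1) := by
          have := ha3 (k+1) (by omega)
          simpa [show 3*(k+1) = 3*k+3 by omega] using this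
        have a4' : a (3*k+4) = 1 := by
          have := (ha (k+1) (by omega)).2
          simpa [show 3*(k+1)+1 = 3*k+4 by omega] using this
        obtain ⟨hp2', hq2'⟩ := hrec (3*k+2) (by omega)
        simp only [show 3*k+2-1 = 3*k+1 by omega, show 3*k+2-2 = 3*k by omega, a2,
          Nat.cast_one, one_mul] at hp2' hq2'
        obtain ⟨hp3', hq3'⟩ := hrec (3*k+3) (by omega)
        simp only [show 3*k+3-1 = 3*k+2 by omega, show 3*k+3-2 = 3*k+1 by omega, a3'] at hp3' hq3'
        obtain ⟨hp4', hq4'⟩ := hrec (3*k+4) (by omega)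
        simp only [show 3*k+4-1 = 3*k+3 by omega, show 3*k+4-2 = 3*k+2 by omega, a4',
          Nat.cast_one, one_mul] at hp4' hq4'
        -- cast to ℝ
        have rp2 := congrArg (fun z : ℤ => (z : ℝ)) hp2'
        have rq2 := congrArg (fun z : ℤ => (z : ℝ)) hq2'
        have rp3 := congrArg (fun z : ℤ => (z : ℝ)) hp3'
        have rq3 := congrArg (fun z : ℤ => (z : ℝ)) hq3'
        have rp4 := congrArg (fun z : ℤ => (z : ℝ)) hp4'
        have rq4 := congrArg (fun z : ℤ => (z : ℝ)) hq4'
        push_cast at rp2 rq2 rp3 rq3 rp4 rq4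
        have hF : ((Nat.factorial (k+1) : ℝ)) = ((k:ℝ)+1) * (Nat.factorial k) := by
          rw [Nat.factorial_succ]
          push_cast
          ring
        push_cast at hK2
        -- A value
        have hAval : Jint_s7 (k+1) (k+1) = (-1 : ℝ) ^ (k+1) * (Nat.factorial (k+1)) *
            ((q (3*k+2) : ℝ) * Real.exp 1 - (p (3*k+2) : ℝ)) := by
          linear_combination hA + ((k:ℝ)+1) * hB - ((k:ℝ)+1) * hC
            + (-1:ℝ)^k * ((q (3*k+2) : ℝ) * Real.exp 1 - (p (3*k+2) : ℝ)) * hF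
            + (-1:ℝ)^k * ((k:ℝ)+1) * (Nat.factorial k : ℝ) * Real.exp 1 * rq2
            - (-1:ℝ)^k * ((k:ℝ)+1) * (Nat.factorial k : ℝ) * rp2
        have hBval : Jint_s7 (k+2) (k+1) = ((k:ℝ)+1) * Jint_s7 (k+1) k - (2*(k:ℝ)+3) * Jint_s7 (k+1) (k+1) := by
          linear_combination hK2 + ((k:ℝ)+1) * hS1
        have hBp : Jint_s7 (k+2) (k+1) = (-1 : ℝ) ^ k * (Nat.factorial (k+1)) *
            ((q (3*k+3) : ℝ) * Real.exp 1 - (p (3*k+3) : ℝ)) := by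
          linear_combination hBval + ((k:ℝ)+1) * hB - (2*(k:ℝ)+3) * hAval
            - (-1:ℝ)^k * (Nat.factorial (k+1) : ℝ) * Real.exp 1 * rq3
            + (-1:ℝ)^k * (Nat.factorial (k+1) : ℝ) * Real.exp 1 * rq2
            + (-1:ℝ)^k * (Nat.factorial (k+1) : ℝ) * rp3
            - (-1:ℝ)^k * (Nat.factorial (k+1) : ℝ) * rp2
            + (-1:ℝ)^k * ((q (3*k) : ℝ) * Real.exp 1 - (p (3*k) : ℝ)) * hF
        constructor
        · show Jint_s7 (k+1) (k+2) = _
          simp only [show 3*(k+1)+1 = 3*k+4 by omega]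
          linear_combination hS2 + hAval - hBp
            + (-1:ℝ)^k * (Nat.factorial (k+1) : ℝ) * Real.exp 1 * rq4
            - (-1:ℝ)^k * (Nat.factorial (k+1) : ℝ) * rp4
        · intro _
          show Jint_s7 (k+2) (k+1) = _
          simp only [show 3*(k+1) = 3*k+3 by omega]
          linear_combination hBp
end

section
/- For every positive integer k, I_{k+1,k} = (−1)^{k+1} · k! · (q_{3k} e − p_{3k}), where I_{k+1,k} := ∫₀¹ x^{k+1} (1-x)ᵏ eˣ dx and p_n/q_n is the n-th convergent of the continued fraction [2; 1, 2, 1, 1, 4, 1, ...]. -/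
noncomputable def II (a b : ℕ) : ℝ := ∫ x in (0:ℝ)..1, x^a * (1-x)^b * Real.exp x

lemma intgI (a b : ℕ) : IntervalIntegrable (fun x : ℝ => x^a*(1-x)^b*Real.exp x) MeasureTheory.volume 0 1 := by
  apply Continuous.intervalIntegrable; continuity

lemma dagger (a b : ℕ) : II a b = II a (b+1) + II (a+1) b := by
  unfold II
  rw [← intervalIntegral.integral_add (intgI a (b+1)) (intgI (a+1) b)]
  apply intervalIntegral.integral_congr
  intro x _
  ring

lemma star (a b : ℕ) : II (a+1) (b+1) = (b+1) * II (a+1) b - (a+1) * II a (b+1) := by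
  have key : ∀ x : ℝ, HasDerivAt (fun x : ℝ => x^(a+1) * (1-x)^(b+1) * Real.exp x)
      ((a+1) * (x^a * (1-x)^(b+1) * Real.exp x) - (b+1) * (x^(a+1) * (1-x)^b * Real.exp x)
        + x^(a+1) * (1-x)^(b+1) * Real.exp x) x := by
    intro x
    have h1 : HasDerivAt (fun x : ℝ => x^(a+1)) ((a+1 : ℝ) * x^a) x := by
      simpa using hasDerivAt_pow (a+1) x
    have h2 : HasDerivAt (fun x : ℝ => (1-x)^(b+1)) (-((b+1 : ℝ) * (1-x)^b)) x := by
      have h0 : HasDerivAt (fun x : ℝ => 1 - x) (-1) x := by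
        have := (hasDerivAt_const x (1:ℝ)).sub (hasDerivAt_id x); simp only [zero_sub] at this; exact this
      have := (hasDerivAt_pow (b+1) (1-x)).comp x h0
      simpa [mul_comm, Function.comp_def] using this
    have h3 := (h1.mul h2).mul (Real.hasDerivAt_exp x)
    refine h3.congr_deriv ?_; simp only [Pi.mul_apply]
    ring
  have h0 : (∫ x in (0:ℝ)..1, ((a+1:ℝ) * (x^a * (1-x)^(b+1) * Real.exp x) - (b+1) * (x^(a+1) * (1-x)^b * Real.exp x)
        + x^(a+1) * (1-x)^(b+1) * Real.exp x)) = 0 := by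
    rw [intervalIntegral.integral_eq_sub_of_hasDerivAt (fun x _ => key x) (by apply Continuous.intervalIntegrable; continuity)]
    simp
  rw [intervalIntegral.integral_add (((intgI a (b+1)).const_mul _).sub ((intgI (a+1) b).const_mul _)) (intgI (a+1) (b+1)),
      intervalIntegral.integral_sub ((intgI a (b+1)).const_mul _) ((intgI (a+1) b).const_mul _),
      intervalIntegral.integral_const_mul, intervalIntegral.integral_const_mul] at h0
  unfold II
  linarith

lemma hA (k : ℕ) : II (k+1) (k+1) = (k+1) * (II (k+1) k - II k (k+1)) := by
  have := star k k
  linarith [star k k]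

lemma hB (k : ℕ) : II (k+2) (k+1) = (k+1) * II (k+1) k - (2*k+3) * II (k+1) (k+1) := by
  have s1 := star (k+1) k
  have d1 := dagger (k+1) k
  push_cast at s1
  linear_combination s1 - ((k:ℝ)+1) * d1

lemma base1 : II 2 1 = 3 * Real.exp 1 - 8 := by
  have key : ∀ x : ℝ, HasDerivAt (fun x : ℝ => (-x^3+4*x^2-8*x+8) * Real.exp x)
      (x^2 * (1-x)^1 * Real.exp x) x := by
    intro x
    have h1 : HasDerivAt (fun x : ℝ => -x^3+4*x^2-8*x+8) (-(3*x^2)+4*(2*x)-8) x := by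
      have p3 : HasDerivAt (fun x : ℝ => x^3) (3*x^2) x := by simpa using hasDerivAt_pow 3 x
      have p2 : HasDerivAt (fun x : ℝ => x^2) (2*x) x := by simpa using hasDerivAt_pow 2 x
      simpa using ((p3.neg.add (p2.const_mul 4)).sub ((hasDerivAt_id x).const_mul 8)).add_const 8
    have := h1.mul (Real.hasDerivAt_exp x)
    refine this.congr_deriv ?_
    ring
  have h0 := intervalIntegral.integral_eq_sub_of_hasDerivAt (f := fun x : ℝ => (-x^3+4*x^2-8*x+8) * Real.exp x)
      (a := 0) (b := 1) (fun x _ => key x) (by apply Continuous.intervalIntegrable; continuity)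
  unfold II
  rw [h0]
  simp
  ring

lemma base2 : II 1 2 = 11 - 4 * Real.exp 1 := by
  have key : ∀ x : ℝ, HasDerivAt (fun x : ℝ => (x^3-5*x^2+11*x-11) * Real.exp x)
      (x^1 * (1-x)^2 * Real.exp x) x := by
    intro x
    have h1 : HasDerivAt (fun x : ℝ => x^3-5*x^2+11*x-11) (3*x^2-5*(2*x)+11) x := by
      have p3 : HasDerivAt (fun x : ℝ => x^3) (3*x^2) x := by simpa using hasDerivAt_pow 3 x
      have p2 : HasDerivAt (fun x : ℝ => x^2) (2*x) x := by simpa using hasDerivAt_pow 2 x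
      simpa using ((p3.sub (p2.const_mul 5)).add ((hasDerivAt_id x).const_mul 11)).sub_const 11
    have := h1.mul (Real.hasDerivAt_exp x)
    refine this.congr_deriv ?_
    ring
  have h0 := intervalIntegral.integral_eq_sub_of_hasDerivAt (f := fun x : ℝ => (x^3-5*x^2+11*x-11) * Real.exp x)
      (a := 0) (b := 1) (fun x _ => key x) (by apply Continuous.intervalIntegrable; continuity)
  unfold II
  rw [h0]
  simp
  ring

theorem stmt8 (a : ℕ → ℕ) (p q : ℕ → ℤ)
    (ha1 : a 1 = 2)
    (ha3 : ∀ k : ℕ, 1 ≤ k → a (3 * k) = 2 * k)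
    (ha : ∀ k : ℕ, 1 ≤ k → a (3 * k - 1) = 1 ∧ a (3 * k + 1) = 1)
    (hp1 : p 1 = 2) (hp2 : p 2 = 3) (hq1 : q 1 = 1) (hq2 : q 2 = 1)
    (hrec : ∀ n : ℕ, 3 ≤ n →
      p n = a n * p (n - 1) + p (n - 2) ∧ q n = a n * q (n - 1) + q (n - 2))
    (k : ℕ) (hk : 1 ≤ k) :
    (∫ x in (0:ℝ)..1, x ^ (k + 1) * (1 - x) ^ k * Real.exp x) =
      (-1 : ℝ) ^ (k + 1) * (Nat.factorial k) *
        ((q (3 * k) : ℝ) * Real.exp 1 - (p (3 * k) : ℝ)) := by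
  have key : ∀ k : ℕ, 1 ≤ k →
      II (k+1) k = (-1:ℝ)^(k+1) * (Nat.factorial k) * ((q (3*k) : ℝ) * Real.exp 1 - (p (3*k) : ℝ)) ∧
      II k (k+1) = (-1:ℝ)^k * (Nat.factorial k) * ((q (3*k+1) : ℝ) * Real.exp 1 - (p (3*k+1) : ℝ)) := by
    intro k hk
    induction k, hk using Nat.le_induction with
    | base =>
      have ha3' : a 3 = 2 := by simpa using ha3 1 le_rfl
      have ha4 : a 4 = 1 := by simpa using (ha 1 le_rfl).2
      have h3 := hrec 3 (by norm_num)
      have h4 := hrec 4 (by norm_num)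
      norm_num [ha3', ha4, hp1, hp2, hq1, hq2] at h3 h4
      have hp3 : p 3 = 8 := by omega
      have hq3' : q 3 = 3 := by omega
      have hp4 : p 4 = 11 := by omega
      have hq4 : q 4 = 4 := by omega
      constructor
      · show II 2 1 = _
        rw [base1]
        norm_num [hp3, hq3']
      · show II 1 2 = _
        rw [base2]
        norm_num [hp4, hq4]
    | succ k hk ih =>
      obtain ⟨ihB, ihC⟩ := ih
      -- CF recurrences
      have haa2 : a (3*k+2) = 1 := by
        have h := (ha (k+1) (by omega)).1
        have e : 3*(k+1) - 1 = 3*k+2 := by omega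
        rwa [e] at h
      have haa3 : a (3*k+3) = 2*(k+1) := by
        have h := ha3 (k+1) (by omega)
        have e : 3*(k+1) = 3*k+3 := by omega
        rwa [e] at h
      have haa4 : a (3*k+4) = 1 := by
        have h := (ha (k+1) (by omega)).2
        have e : 3*(k+1)+1 = 3*k+4 := by omega
        rwa [e] at h
      have h2 := hrec (3*k+2) (by omega)
      have h3 := hrec (3*k+3) (by omega)
      have h4 := hrec (3*k+4) (by omega)
      have e21 : 3*k+2-1 = 3*k+1 := by omega
      have e22 : 3*k+2-2 = 3*k := by omega
      have e31 : 3*k+3-1 = 3*k+2 := by omega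
      have e32 : 3*k+3-2 = 3*k+1 := by omega
      have e41 : 3*k+4-1 = 3*k+3 := by omega
      have e42 : 3*k+4-2 = 3*k+2 := by omega
      rw [e21, e22, haa2] at h2
      rw [e31, e32, haa3] at h3
      rw [e41, e42, haa4] at h4
      have hp2R : ((p (3*k+2) : ℝ)) = (p (3*k+1) : ℝ) + (p (3*k) : ℝ) := by
        exact_mod_cast congrArg (Int.cast : ℤ → ℝ) (by simpa using h2.1)
      have hq2R : ((q (3*k+2) : ℝ)) = (q (3*k+1) : ℝ) + (q (3*k) : ℝ) := by
        exact_mod_cast congrArg (Int.cast : ℤ → ℝ) (by simpa using h2.2)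
      have hp3R : ((p (3*k+3) : ℝ)) = (2*(k:ℝ)+2) * (p (3*k+2) : ℝ) + (p (3*k+1) : ℝ) := by
        have := congrArg (Int.cast : ℤ → ℝ) h3.1
        push_cast at this
        linarith
      have hq3R : ((q (3*k+3) : ℝ)) = (2*(k:ℝ)+2) * (q (3*k+2) : ℝ) + (q (3*k+1) : ℝ) := by
        have := congrArg (Int.cast : ℤ → ℝ) h3.2
        push_cast at this
        linarith
      have hp4R : ((p (3*k+4) : ℝ)) = (p (3*k+3) : ℝ) + (p (3*k+2) : ℝ) := by
        exact_mod_cast congrArg (Int.cast : ℤ → ℝ) (by simpa using h4.1)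
      have hq4R : ((q (3*k+4) : ℝ)) = (q (3*k+3) : ℝ) + (q (3*k+2) : ℝ) := by
        exact_mod_cast congrArg (Int.cast : ℤ → ℝ) (by simpa using h4.2)
      -- A_{k+1}
      have hAval : II (k+1) (k+1) =
          (-1:ℝ)^(k+1) * (((k:ℝ)+1) * Nat.factorial k) * ((q (3*k+2) : ℝ) * Real.exp 1 - (p (3*k+2) : ℝ)) := by
        rw [hA k, ihB, ihC, hq2R, hp2R]
        ring
      have e1 : 3*(k+1) = 3*k+3 := by omega
      have e2 : 3*(k+1)+1 = 3*k+4 := by omega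
      have hfact : ((Nat.factorial (k+1) : ℝ)) = ((k:ℝ)+1) * Nat.factorial k := by
        rw [Nat.factorial_succ]; push_cast; ring
      have hBval : II (k+1+1) (k+1) =
          (-1:ℝ)^(k+1+1) * (Nat.factorial (k+1)) * ((q (3*(k+1)) : ℝ) * Real.exp 1 - (p (3*(k+1)) : ℝ)) := by
        rw [e1, hfact]
        have := hB k
        rw [ihB, hAval] at this
        rw [show II (k+1+1) (k+1) = II (k+2) (k+1) from rfl, this, hq3R, hp3R, hq2R, hp2R]
        ring
      refine ⟨hBval, ?_⟩
      have hCrec : II (k+1) (k+1+1) = II (k+1) (k+1) - II (k+1+1) (k+1) := by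
        have := dagger (k+1) (k+1)
        linarith
      rw [hCrec, hAval, hBval, e2, e1, hfact, hq4R, hp4R]
      ring
  have h := (key k hk).1
  unfold II at h
  convert h using 2
end

section
/- The regular continued fraction [2; 1, 2, 1, 1, 4, 1, 1, 6, 1, ...] (with partial quotients a_1 = 2, a_{3k} = 2k, a_{3k−1} = a_{3k+1} = 1 for k ≥ 1) converges to e. -/
open MeasureTheory intervalIntegral Set

noncomputable def Jcf (i j : ℕ) : ℝ := ∫ x in (0:ℝ)..1, x^i * (x-1)^j * Real.exp x

lemma Jcf_int (i j : ℕ) : IntervalIntegrable (fun x : ℝ => x^i * (x-1)^j * Real.exp x)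
    volume 0 1 := by
  have : Continuous fun x : ℝ => x^i * (x-1)^j * Real.exp x := by fun_prop
  exact this.intervalIntegrable 0 1

lemma Jcf_key (m k : ℕ) :
    ((m:ℝ)+1) * Jcf m (k+1) + ((k:ℝ)+1) * Jcf (m+1) k + Jcf (m+1) (k+1) = 0 := by
  have hd : ∀ x ∈ Set.uIcc (0:ℝ) 1, HasDerivAt (fun y : ℝ => y^(m+1)*(y-1)^(k+1)*Real.exp y)
      ((((m:ℝ)+1) * (x^m * (x-1)^(k+1) * Real.exp x) +
        (((k:ℝ)+1) * (x^(m+1) * (x-1)^k * Real.exp x) + x^(m+1)*(x-1)^(k+1)*Real.exp x)) ) x := by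
    intro x _
    have h1 : HasDerivAt (fun y : ℝ => y^(m+1)) (((m:ℝ)+1) * x^m) x := by
      simpa using hasDerivAt_pow (m+1) x
    have h2 : HasDerivAt (fun y : ℝ => (y-1)^(k+1)) (((k:ℝ)+1) * (x-1)^k) x := by
      simpa using ((hasDerivAt_id x).sub_const 1).fun_pow (k+1)
    have := (h1.fun_mul h2).fun_mul (Real.hasDerivAt_exp x)
    refine this.congr_deriv ?_
    ring
  have hc : Continuous fun x : ℝ =>
      (((m:ℝ)+1) * (x^m * (x-1)^(k+1) * Real.exp x) +
        (((k:ℝ)+1) * (x^(m+1) * (x-1)^k * Real.exp x) + x^(m+1)*(x-1)^(k+1)*Real.exp x)) := by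
    fun_prop
  have h0 := intervalIntegral.integral_eq_sub_of_hasDerivAt hd (hc.intervalIntegrable 0 1)
  simp at h0
  rw [intervalIntegral.integral_add ((Jcf_int m (k+1)).const_mul _)
      (((Jcf_int (m+1) k).const_mul _).add (Jcf_int (m+1) (k+1))),
    intervalIntegral.integral_add ((Jcf_int (m+1) k).const_mul _) (Jcf_int (m+1) (k+1)),
    intervalIntegral.integral_const_mul, intervalIntegral.integral_const_mul] at h0
  unfold Jcf
  linarith [h0]

lemma Jcf_split (i j : ℕ) : Jcf i (j+1) = Jcf (i+1) j - Jcf i j := by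
  unfold Jcf
  rw [← intervalIntegral.integral_sub (Jcf_int (i+1) j) (Jcf_int i j)]
  apply intervalIntegral.integral_congr
  intro x _
  ring

lemma Jcf00 : Jcf 0 0 = Real.exp 1 - 1 := by
  unfold Jcf
  simp [integral_exp]

lemma Jcf10 : Jcf 1 0 = 1 := by
  have hd : ∀ x ∈ Set.uIcc (0:ℝ) 1, HasDerivAt (fun y : ℝ => (y-1)*Real.exp y)
      (x^1 * (x-1)^0 * Real.exp x) x := by
    intro x _
    have := (((hasDerivAt_id x).sub_const 1).fun_mul (Real.hasDerivAt_exp x))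
    refine this.congr_deriv ?_
    simp only [id]
    ring
  have h0 := intervalIntegral.integral_eq_sub_of_hasDerivAt hd (Jcf_int 1 0)
  unfold Jcf
  rw [h0]; simp

lemma Jcf_bound (i j : ℕ) : |Jcf i j| ≤ 3 := by
  unfold Jcf
  have h := intervalIntegral.norm_integral_le_of_norm_le_const
    (a := (0:ℝ)) (b := 1) (C := 3) (f := fun x => x^i * (x-1)^j * Real.exp x) ?_
  · simpa using h
  · intro x hx
    rw [Set.uIoc_of_le (by norm_num)] at hx
    obtain ⟨hx0, hx1⟩ := hx
    have e1 : |x ^ i| ≤ 1 := by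
      rw [abs_pow]; apply pow_le_one₀ (abs_nonneg _); rw [abs_of_pos hx0]; linarith
    have e2 : |(x-1) ^ j| ≤ 1 := by
      rw [abs_pow]; apply pow_le_one₀ (abs_nonneg _); rw [abs_of_nonpos (by linarith)]; linarith
    have e3 : |Real.exp x| ≤ 3 := by
      rw [abs_of_pos (Real.exp_pos x)]
      calc Real.exp x ≤ Real.exp 1 := Real.exp_le_exp.2 (by linarith)
      _ ≤ 3 := by linarith [Real.exp_one_lt_d9]
    have : |x^i * (x-1)^j * Real.exp x| ≤ 1 * 1 * 3 := by
      rw [abs_mul, abs_mul]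
      have := mul_le_mul (mul_le_mul e1 e2 (abs_nonneg _) (by norm_num)) e3 (abs_nonneg _)
        (by norm_num)
      linarith
    calc ‖x ^ i * (x - 1) ^ j * Real.exp x‖ = |x^i * (x-1)^j * Real.exp x| := rfl
    _ ≤ 1 * 1 * 3 := this
    _ = 3 := by norm_num

lemma aux_bound (J P Q : ℝ) (m t : ℕ) (hJ : |J| ≤ 3)
    (h : J = (Nat.factorial m : ℝ) * (P - Q)) (ht : t ≤ m) :
    |P - Q| ≤ 3 / (Nat.factorial t : ℝ) := by
  have hm : (0:ℝ) < (Nat.factorial m : ℝ) := by exact_mod_cast Nat.factorial_pos m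
  have htm : (Nat.factorial t : ℝ) ≤ (Nat.factorial m : ℝ) := by
    exact_mod_cast Nat.factorial_le ht
  have htp : (0:ℝ) < (Nat.factorial t : ℝ) := by exact_mod_cast Nat.factorial_pos t
  rw [h, abs_mul, abs_of_pos hm] at hJ
  have h1 : |P - Q| ≤ 3 / (Nat.factorial m : ℝ) := by
    rw [le_div_iff₀ hm]; nlinarith [abs_nonneg (P - Q)]
  calc |P - Q| ≤ 3 / (Nat.factorial m : ℝ) := h1
  _ ≤ 3 / (Nat.factorial t : ℝ) := by
    apply div_le_div_of_nonneg_left (by norm_num) htp htm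

theorem stmt10 (a : ℕ → ℕ) (p q : ℕ → ℤ)
    (ha1 : a 1 = 2)
    (ha3 : ∀ k : ℕ, 1 ≤ k → a (3 * k) = 2 * k)
    (ha : ∀ k : ℕ, 1 ≤ k → a (3 * k - 1) = 1 ∧ a (3 * k + 1) = 1)
    (hp1 : p 1 = 2) (hp2 : p 2 = 3) (hq1 : q 1 = 1) (hq2 : q 2 = 1)
    (hrec : ∀ n : ℕ, 3 ≤ n →
      p n = a n * p (n - 1) + p (n - 2) ∧ q n = a n * q (n - 1) + q (n - 2)) :
    Filter.Tendsto (fun n => (p n : ℝ) / (q n : ℝ)) Filter.atTop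
      (nhds (Real.exp 1)) := by
  set E := Real.exp 1 with hE
  -- base continued fraction values
  have a3 : a 3 = 2 := by have := ha3 1 le_rfl; norm_num at this; exact this
  have a4 : a 4 = 1 := by have := (ha 1 le_rfl).2; norm_num at this; exact this
  have h3 := hrec 3 (by norm_num)
  have h4 := hrec 4 (by norm_num)
  norm_num at h3 h4
  have hp3 : p 3 = 8 := by rw [h3.1, a3, hp2, hp1]; norm_num
  have hq3 : q 3 = 3 := by rw [h3.2, a3, hq2, hq1]; norm_num
  have hp4 : p 4 = 11 := by rw [h4.1, a4, hp3, hp2]; norm_num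
  have hq4 : q 4 = 4 := by rw [h4.2, a4, hq3, hq2]; norm_num
  -- base integral values
  have hJ01 : Jcf 0 1 = 2 - E := by
    have := Jcf_split 0 0; rw [Jcf10, Jcf00] at this; rw [this]; ring
  have hJ11 : Jcf 1 1 = E - 3 := by
    have hk := Jcf_key 0 0
    rw [hJ01, Jcf10] at hk; push_cast at hk; linarith
  have hJ21 : Jcf 2 1 = 8 - 3*E := by
    have hk := Jcf_key 0 1
    have s1 := Jcf_split 0 1
    have s2 := Jcf_split 1 1
    push_cast at hk
    rw [s1, s2, hJ01, hJ11] at hk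
    linarith
  have hJ12 : Jcf 1 2 = 11 - 4*E := by
    have s2 := Jcf_split 1 1
    rw [hJ21, hJ11] at s2; rw [s2]; ring
  -- the main induction
  have main : ∀ k : ℕ,
      Jcf (k+1) (k+1) = (Nat.factorial (k+1) : ℝ) * ((q (3*k+2) : ℝ) * E - (p (3*k+2) : ℝ)) ∧
      Jcf (k+2) (k+1) = (Nat.factorial (k+1) : ℝ) * ((p (3*k+3) : ℝ) - (q (3*k+3) : ℝ) * E) ∧
      Jcf (k+1) (k+2) = (Nat.factorial (k+1) : ℝ) * ((p (3*k+4) : ℝ) - (q (3*k+4) : ℝ) * E) := by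
    intro k
    induction k with
    | zero =>
      refine ⟨?_, ?_, ?_⟩ <;> norm_num [Nat.factorial]
      · rw [hJ11, hq2, hp2]; push_cast; ring
      · rw [hJ21, hp3, hq3]; push_cast; ring
      · rw [hJ12, hp4, hq4]; push_cast; ring
    | succ k ih =>
      obtain ⟨hA, hB, hC⟩ := ih
      have aa1 : a (3*k+5) = 1 := by
        have := (ha (k+2) (by omega)).1
        rw [show 3*(k+2)-1 = 3*k+5 from by omega] at this; exact this
      have aa2 : a (3*k+6) = 2*(k+2) := by
        have := ha3 (k+2) (by omega)
        rw [show 3*(k+2) = 3*k+6 from by omega] at this; exact this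
      have aa3 : a (3*k+7) = 1 := by
        have := (ha (k+2) (by omega)).2
        rw [show 3*(k+2)+1 = 3*k+7 from by omega] at this; exact this
      have h5 := hrec (3*k+5) (by omega)
      have h6 := hrec (3*k+6) (by omega)
      have h7 := hrec (3*k+7) (by omega)
      rw [show 3*k+5-1 = 3*k+4 from by omega, show 3*k+5-2 = 3*k+3 from by omega, aa1] at h5
      rw [show 3*k+6-1 = 3*k+5 from by omega, show 3*k+6-2 = 3*k+4 from by omega, aa2] at h6
      rw [show 3*k+7-1 = 3*k+6 from by omega, show 3*k+7-2 = 3*k+5 from by omega, aa3] at h7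
      have hp5 : (p (3*k+5) : ℝ) = p (3*k+4) + p (3*k+3) := by
        have := congrArg (Int.cast : ℤ → ℝ) h5.1; push_cast at this; linarith
      have hq5 : (q (3*k+5) : ℝ) = q (3*k+4) + q (3*k+3) := by
        have := congrArg (Int.cast : ℤ → ℝ) h5.2; push_cast at this; linarith
      have hp6 : (p (3*k+6) : ℝ) = 2*((k:ℝ)+2) * p (3*k+5) + p (3*k+4) := by
        have := congrArg (Int.cast : ℤ → ℝ) h6.1; push_cast at this; linarith
      have hq6 : (q (3*k+6) : ℝ) = 2*((k:ℝ)+2) * q (3*k+5) + q (3*k+4) := by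
        have := congrArg (Int.cast : ℤ → ℝ) h6.2; push_cast at this; linarith
      have hp7 : (p (3*k+7) : ℝ) = p (3*k+6) + p (3*k+5) := by
        have := congrArg (Int.cast : ℤ → ℝ) h7.1; push_cast at this; linarith
      have hq7 : (q (3*k+7) : ℝ) = q (3*k+6) + q (3*k+5) := by
        have := congrArg (Int.cast : ℤ → ℝ) h7.2; push_cast at this; linarith
      have hF : (Nat.factorial (k+2) : ℝ) = ((k:ℝ)+2) * (Nat.factorial (k+1) : ℝ) := by
        rw [show k+2 = (k+1)+1 from rfl, Nat.factorial_succ]; push_cast; ring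
      have key1 := Jcf_key (k+1) (k+1)
      have key2 := Jcf_key (k+1) (k+2)
      have s1 := Jcf_split (k+1) (k+2)
      have s2 := Jcf_split (k+2) (k+2)
      push_cast at key1 key2
      have hA2 : Jcf (k+2) (k+2) =
          (Nat.factorial (k+2) : ℝ) * ((q (3*k+5) : ℝ) * E - (p (3*k+5) : ℝ)) := by
        rw [hF, hp5, hq5]
        linear_combination key1 - ((k:ℝ)+2)*hB - ((k:ℝ)+2)*hC
      have hB2 : Jcf (k+3) (k+2) =
          (Nat.factorial (k+2) : ℝ) * ((p (3*k+6) : ℝ) - (q (3*k+6) : ℝ) * E) := by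
        rw [hp6, hq6]
        linear_combination key2 - ((k:ℝ)+2)*s1 - s2 + ((k:ℝ)+2)*hC
          - (2*(k:ℝ)+4)*hA2 - ((p (3*k+4) : ℝ) - (q (3*k+4) : ℝ)*E) * hF
      have hC2 : Jcf (k+2) (k+3) =
          (Nat.factorial (k+2) : ℝ) * ((p (3*k+7) : ℝ) - (q (3*k+7) : ℝ) * E) := by
        rw [hp7, hq7]
        linear_combination s2 + hB2 - hA2
      refine ⟨?_, ?_, ?_⟩
      · rw [show 3*(k+1)+2 = 3*k+5 from by omega]; exact hA2
      · rw [show 3*(k+1)+3 = 3*k+6 from by omega]; exact hB2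
      · rw [show 3*(k+1)+4 = 3*k+7 from by omega]; exact hC2
  -- q is at least 1
  have hqpos : ∀ n : ℕ, 1 ≤ q (n+1) ∧ 1 ≤ q (n+2) := by
    intro n
    induction n with
    | zero => exact ⟨by rw [show (0:ℕ)+1 = 1 from rfl, hq1], by rw [show (0:ℕ)+2 = 2 from rfl, hq2]⟩
    | succ n ih =>
      refine ⟨by rw [show n+1+1 = n+2 from rfl]; exact ih.2, ?_⟩
      have h := (hrec (n+3) (by omega)).2
      rw [show n+3-1 = n+2 from by omega, show n+3-2 = n+1 from by omega] at h
      have h1 : (0:ℤ) ≤ (a (n+3) : ℤ) * q (n+2) :=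
        mul_nonneg (Int.natCast_nonneg _) (by linarith [ih.2])
      rw [show n+1+2 = n+3 from rfl, h]
      linarith [ih.1]
  have hqpos' : ∀ n : ℕ, 1 ≤ n → (1:ℝ) ≤ (q n : ℝ) := by
    intro n hn
    obtain ⟨m, rfl⟩ : ∃ m, n = m + 1 := ⟨n - 1, by omega⟩
    exact_mod_cast (hqpos m).1
  -- the bound
  have habs : ∀ n : ℕ, 2 ≤ n →
      |(p n : ℝ) - (q n : ℝ) * E| ≤ 3 / (Nat.factorial ((n-1)/3) : ℝ) := by
    intro n hn
    obtain ⟨k, hk⟩ : ∃ k, n = 3*k+2 ∨ n = 3*k+3 ∨ n = 3*k+4 := ⟨(n-2)/3, by omega⟩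
    rcases hk with rfl | rfl | rfl
    · rw [show (3*k+2-1)/3 = k from by omega, abs_sub_comm]
      exact aux_bound _ _ _ (k+1) k (Jcf_bound _ _) (main k).1 (by omega)
    · rw [show (3*k+3-1)/3 = k from by omega]
      exact aux_bound _ _ _ (k+1) k (Jcf_bound _ _) (main k).2.1 (by omega)
    · rw [show (3*k+4-1)/3 = k+1 from by omega]
      exact aux_bound _ _ _ (k+1) (k+1) (Jcf_bound _ _) (main k).2.2 le_rfl
  -- squeeze
  have hsq : Filter.Tendsto (fun n : ℕ => (p n : ℝ) / (q n : ℝ) - E) Filter.atTop (nhds 0) := by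
    apply squeeze_zero_norm' (a := fun n : ℕ => 3 / (Nat.factorial ((n-1)/3) : ℝ))
    · filter_upwards [Filter.eventually_ge_atTop 2] with n hn
      have h1 : (1:ℝ) ≤ (q n : ℝ) := hqpos' n (by omega)
      have h0 : (0:ℝ) < (q n : ℝ) := by linarith
      have h2 := habs n hn
      have h3 : (p n : ℝ) / (q n : ℝ) - E = ((p n : ℝ) - (q n : ℝ) * E) / (q n : ℝ) := by
        field_simp
      rw [Real.norm_eq_abs, h3, abs_div, abs_of_pos h0]
      calc |(p n : ℝ) - (q n : ℝ) * E| / (q n : ℝ) ≤ |(p n : ℝ) - (q n : ℝ) * E| :=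
        div_le_self (abs_nonneg _) h1
      _ ≤ 3 / (Nat.factorial ((n-1)/3) : ℝ) := h2
    · have t1 : Filter.Tendsto (fun n : ℕ => (n-1)/3) Filter.atTop Filter.atTop := by
        apply Filter.tendsto_atTop.2
        intro b
        filter_upwards [Filter.eventually_ge_atTop (3*b+1)] with n hn
        omega
      have t2 : Filter.Tendsto (fun m : ℕ => (Nat.factorial m : ℝ)) Filter.atTop Filter.atTop := by
        apply tendsto_natCast_atTop_atTop.comp
        exact Filter.tendsto_atTop_mono (fun n => Nat.self_le_factorial n) Filter.tendsto_id
      have t3 : Filter.Tendsto (fun m : ℕ => 3 / (Nat.factorial m : ℝ)) Filter.atTop (nhds 0) :=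
        Filter.Tendsto.div_atTop tendsto_const_nhds t2
      exact t3.comp t1
  have := hsq.add_const E
  simpa using this
end

section
/- For sequences p_n, q_n defined by the continued-fraction recurrences with partial quotients a_1 = 2, a_{3k} = 2k, a_{3k±1} = 1 (k ≥ 1), one has p_{3k+4} = (2k+3) p_{3k} + (2k+4) p_{3k+1} and q_{3k+4} = (2k+3) q_{3k} + (2k+4) q_{3k+1} for all k ≥ 1. -/
theorem stmt11 (a : ℕ → ℕ) (p q : ℕ → ℤ)
    (ha1 : a 1 = 2)
    (ha3 : ∀ k : ℕ, 1 ≤ k → a (3 * k) = 2 * k)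
    (ha : ∀ k : ℕ, 1 ≤ k → a (3 * k - 1) = 1 ∧ a (3 * k + 1) = 1)
    (hp1 : p 1 = 2) (hp2 : p 2 = 3) (hq1 : q 1 = 1) (hq2 : q 2 = 1)
    (hrec : ∀ n : ℕ, 3 ≤ n →
      p n = a n * p (n - 1) + p (n - 2) ∧ q n = a n * q (n - 1) + q (n - 2))
    (k : ℕ) (hk : 1 ≤ k) :
    p (3 * k + 4) = (2 * k + 3) * p (3 * k) + (2 * k + 4) * p (3 * k + 1) ∧
    q (3 * k + 4) = (2 * k + 3) * q (3 * k) + (2 * k + 4) * q (3 * k + 1) := by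
  have h2 := ha (k + 1) (by omega)
  have ha2 : a (3 * k + 2) = 1 := by
    have := h2.1
    have e : 3 * (k + 1) - 1 = 3 * k + 2 := by omega
    rwa [e] at this
  have ha4 : a (3 * k + 4) = 1 := by
    have := h2.2
    have e : 3 * (k + 1) + 1 = 3 * k + 4 := by omega
    rwa [e] at this
  have ha3' : a (3 * k + 3) = 2 * k + 2 := by
    have := ha3 (k + 1) (by omega)
    have e : 3 * (k + 1) = 3 * k + 3 := by omega
    rw [e] at this
    omega
  have r2 := hrec (3 * k + 2) (by omega)
  have r3 := hrec (3 * k + 3) (by omega)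
  have r4 := hrec (3 * k + 4) (by omega)
  have e1 : 3 * k + 2 - 1 = 3 * k + 1 := by omega
  have e2 : 3 * k + 2 - 2 = 3 * k := by omega
  have e3 : 3 * k + 3 - 1 = 3 * k + 2 := by omega
  have e4 : 3 * k + 3 - 2 = 3 * k + 1 := by omega
  have e5 : 3 * k + 4 - 1 = 3 * k + 3 := by omega
  have e6 : 3 * k + 4 - 2 = 3 * k + 2 := by omega
  rw [e1, e2, ha2] at r2
  rw [e3, e4, ha3'] at r3
  rw [e5, e6, ha4] at r4
  obtain ⟨r2p, r2q⟩ := r2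
  obtain ⟨r3p, r3q⟩ := r3
  obtain ⟨r4p, r4q⟩ := r4
  constructor
  · rw [r4p, r3p, r2p]; push_cast; ring
  · rw [r4q, r3q, r2q]; push_cast; ring
end

section
/- For every positive integer k, q_{3k−1} · e − p_{3k−1} has the same sign as (−1)ᵏ, where p_n/q_n is the n-th convergent of the continued fraction [2; 1, 2, 1, 1, 4, 1, ...]. -/
open intervalIntegral MeasureTheory

noncomputable def AA (n : ℕ) : ℝ :=
  ∫ x in (0:ℝ)..1, x ^ n * (x - 1) ^ n / n.factorial * Real.exp x
noncomputable def BB (n : ℕ) : ℝ :=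
  ∫ x in (0:ℝ)..1, x ^ (n + 1) * (x - 1) ^ n / n.factorial * Real.exp x
noncomputable def CC (n : ℕ) : ℝ :=
  ∫ x in (0:ℝ)..1, x ^ n * (x - 1) ^ (n + 1) / n.factorial * Real.exp x

lemma intg (a b : ℕ) (c : ℝ) :
    IntervalIntegrable (fun x : ℝ => x ^ a * (x - 1) ^ b / c * Real.exp x) volume 0 1 :=
  ((((continuous_pow a).mul ((continuous_id.sub continuous_const).pow b)).div_const c).mul
    Real.continuous_exp).intervalIntegrable 0 1

lemma hd (m k : ℕ) (c : ℝ) (x : ℝ) :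
    HasDerivAt (fun y : ℝ => y ^ (m + 1) * (y - 1) ^ (k + 1) * Real.exp y / c)
      ((((m : ℝ) + 1) * x ^ m * (x - 1) ^ (k + 1) + ((k : ℝ) + 1) * x ^ (m + 1) * (x - 1) ^ k
        + x ^ (m + 1) * (x - 1) ^ (k + 1)) * Real.exp x / c) x := by
  have h1 : HasDerivAt (fun y : ℝ => y ^ (m + 1)) (((m : ℝ) + 1) * x ^ m) x := by
    simpa using hasDerivAt_pow (m + 1) x
  have h2 : HasDerivAt (fun y : ℝ => (y - 1) ^ (k + 1)) (((k : ℝ) + 1) * (x - 1) ^ k) x := by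
    simpa using ((hasDerivAt_id x).sub_const 1).fun_pow (k + 1)
  have := ((h1.fun_mul h2).fun_mul (Real.hasDerivAt_exp x)).div_const c
  refine this.congr_deriv ?_
  ring

lemma ftc0 (m k : ℕ) (c : ℝ) :
    ∫ x in (0:ℝ)..1,
      (((m : ℝ) + 1) * x ^ m * (x - 1) ^ (k + 1) + ((k : ℝ) + 1) * x ^ (m + 1) * (x - 1) ^ k
        + x ^ (m + 1) * (x - 1) ^ (k + 1)) * Real.exp x / c = 0 := by
  rw [integral_eq_sub_of_hasDerivAt (fun x _ => hd m k c x)]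
  · norm_num
  · apply Continuous.intervalIntegrable
    fun_prop

lemma R1 (n : ℕ) : AA (n + 1) + BB n + CC n = 0 := by
  have h := ftc0 n n ((n + 1).factorial : ℝ)
  rw [AA, BB, CC, ← integral_add (intg _ _ _) (intg _ _ _),
    ← integral_add ((intg _ _ _).add (intg _ _ _)) (intg _ _ _)]
  refine Eq.trans (integral_congr fun x _ => ?_) h
  have hfac : ((n + 1).factorial : ℝ) = ((n : ℝ) + 1) * n.factorial := by
    push_cast [Nat.factorial_succ]; ring
  have h0 : (n.factorial : ℝ) ≠ 0 := Nat.cast_ne_zero.mpr n.factorial_ne_zero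
  have h1 : ((n : ℝ) + 1) ≠ 0 := by positivity
  rw [hfac]
  field_simp
  ring

lemma R2 (n : ℕ) : (2 * (n : ℝ) + 3) * AA (n + 1) + CC (n + 1) - CC n = 0 := by
  have h := ftc0 n (n + 1) ((n + 1).factorial : ℝ)
  rw [AA, CC, CC, ← intervalIntegral.integral_const_mul, ← integral_add ((intg _ _ _).const_mul _) (intg _ _ _),
    ← integral_sub (((intg _ _ _).const_mul _).add (intg _ _ _)) (intg _ _ _)]
  refine Eq.trans (integral_congr fun x _ => ?_) h
  have hfac : ((n + 1).factorial : ℝ) = ((n : ℝ) + 1) * n.factorial := by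
    push_cast [Nat.factorial_succ]; ring
  have h0 : (n.factorial : ℝ) ≠ 0 := Nat.cast_ne_zero.mpr n.factorial_ne_zero
  have h1 : ((n : ℝ) + 1) ≠ 0 := by positivity
  rw [hfac]
  field_simp
  push_cast
  ring

lemma R3 (n : ℕ) : CC n = BB n - AA n := by
  rw [AA, BB, CC, ← integral_sub (intg _ _ _) (intg _ _ _)]
  apply integral_congr
  intro x _
  ring

lemma BB0 : BB 0 = 1 := by
  have h : ∀ x ∈ Set.uIcc (0:ℝ) 1, HasDerivAt (fun y : ℝ => (y - 1) * Real.exp y)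
      (x ^ (0 + 1) * (x - 1) ^ 0 / (Nat.factorial 0 : ℝ) * Real.exp x) x := by
    intro x _
    have := (((hasDerivAt_id x).sub_const 1).fun_mul (Real.hasDerivAt_exp x))
    refine this.congr_deriv ?_
    norm_num
    ring
  rw [BB, integral_eq_sub_of_hasDerivAt h (intg _ _ _)]
  norm_num [Real.exp_zero]

lemma CC0 : CC 0 = 2 - Real.exp 1 := by
  have h : ∀ x ∈ Set.uIcc (0:ℝ) 1, HasDerivAt (fun y : ℝ => (y - 2) * Real.exp y)
      (x ^ 0 * (x - 1) ^ (0 + 1) / (Nat.factorial 0 : ℝ) * Real.exp x) x := by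
    intro x _
    have := (((hasDerivAt_id x).sub_const 2).fun_mul (Real.hasDerivAt_exp x))
    refine this.congr_deriv ?_
    norm_num
    ring
  rw [CC, integral_eq_sub_of_hasDerivAt h (intg _ _ _)]
  norm_num [Real.exp_zero]
  ring

lemma AApos (n : ℕ) : 0 < (-1 : ℝ) ^ n * AA n := by
  rw [AA, ← intervalIntegral.integral_const_mul]
  have heq : ∀ x : ℝ, (-1 : ℝ) ^ n * (x ^ n * (x - 1) ^ n / n.factorial * Real.exp x)
      = x ^ n * (1 - x) ^ n / n.factorial * Real.exp x := by
    intro x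
    have : (1 - x) ^ n = (-1 : ℝ) ^ n * (x - 1) ^ n := by
      rw [show (1 - x : ℝ) = -1 * (x - 1) by ring, mul_pow]
    rw [this]; ring
  simp_rw [heq]
  apply intervalIntegral_pos_of_pos_on (Continuous.intervalIntegrable (by fun_prop) 0 1)
  · intro x hx
    have h1 : (0:ℝ) < x := hx.1
    have h2 : (0:ℝ) < 1 - x := by linarith [hx.2]
    have h3 : (0:ℝ) < (n.factorial : ℝ) := by positivity
    positivity
  · norm_num

lemma main (a : ℕ → ℕ) (p q : ℕ → ℤ)
    (ha1 : a 1 = 2)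
    (ha3 : ∀ k : ℕ, 1 ≤ k → a (3 * k) = 2 * k)
    (ha : ∀ k : ℕ, 1 ≤ k → a (3 * k - 1) = 1 ∧ a (3 * k + 1) = 1)
    (hp1 : p 1 = 2) (hp2 : p 2 = 3) (hq1 : q 1 = 1) (hq2 : q 2 = 1)
    (hrec : ∀ n : ℕ, 3 ≤ n →
      p n = a n * p (n - 1) + p (n - 2) ∧ q n = a n * q (n - 1) + q (n - 2)) :
    ∀ n : ℕ, (AA (n + 1) = (q (3 * n + 2) : ℝ) * Real.exp 1 - (p (3 * n + 2) : ℝ))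
      ∧ (BB (n + 1) = (p (3 * n + 3) : ℝ) - (q (3 * n + 3) : ℝ) * Real.exp 1)
      ∧ (CC (n + 1) = (p (3 * n + 4) : ℝ) - (q (3 * n + 4) : ℝ) * Real.exp 1) := by
  intro n
  induction n with
  | zero =>
    have hA : AA 1 = (q 2 : ℝ) * Real.exp 1 - (p 2 : ℝ) := by
      have h1 := R1 0
      rw [BB0, CC0] at h1
      rw [hp2, hq2]; push_cast; linarith
    have ha3' : a 3 = 2 := by have := ha3 1 le_rfl; simpa using this
    have hp3 : p 3 = 8 := by
      have := (hrec 3 le_rfl).1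
      simp only [show 3 - 1 = 2 from rfl, show 3 - 2 = 1 from rfl] at this
      rw [this, ha3', hp2, hp1]; norm_num
    have hq3 : q 3 = 3 := by
      have := (hrec 3 le_rfl).2
      simp only [show 3 - 1 = 2 from rfl, show 3 - 2 = 1 from rfl] at this
      rw [this, ha3', hq2, hq1]; norm_num
    have ha4 : a 4 = 1 := by have := (ha 1 le_rfl).2; simpa using this
    have hp4 : p 4 = 11 := by
      have := (hrec 4 (by norm_num)).1
      simp only [show 4 - 1 = 3 from rfl, show 4 - 2 = 2 from rfl] at this
      rw [this, ha4, hp3, hp2]; norm_num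
    have hq4 : q 4 = 4 := by
      have := (hrec 4 (by norm_num)).2
      simp only [show 4 - 1 = 3 from rfl, show 4 - 2 = 2 from rfl] at this
      rw [this, ha4, hq3, hq2]; norm_num
    have hB : BB 1 = (p 3 : ℝ) - (q 3 : ℝ) * Real.exp 1 := by
      have h2 := R2 0
      have h3 := R3 1
      rw [CC0] at h2
      rw [hp3, hq3, hp2, hq2] at *
      push_cast at *
      nlinarith [hA, h2, h3]
    have hC : CC 1 = (p 4 : ℝ) - (q 4 : ℝ) * Real.exp 1 := by
      have h3 := R3 1
      rw [h3, hB, hA, hp4, hq4, hp3, hq3, hp2, hq2]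
      push_cast; ring
    exact ⟨by simpa using hA, by simpa using hB, by simpa using hC⟩
  | succ n ih =>
    obtain ⟨ihA, ihB, ihC⟩ := ih
    have hap : a (3 * (n + 2) - 1) = 1 ∧ a (3 * (n + 2) + 1) = 1 := ha (n + 2) (by omega)
    have ha5 : a (3 * n + 5) = 1 := by
      have := hap.1; rwa [show 3 * (n + 2) - 1 = 3 * n + 5 by omega] at this
    have ha6 : a (3 * n + 6) = 2 * (n + 2) := by
      have := ha3 (n + 2) (by omega); rwa [show 3 * (n + 2) = 3 * n + 6 by omega] at this
    have ha7 : a (3 * n + 7) = 1 := by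
      have := hap.2; rwa [show 3 * (n + 2) + 1 = 3 * n + 7 by omega] at this
    have hp5 : (p (3 * n + 5) : ℝ) = (p (3 * n + 4) : ℝ) + (p (3 * n + 3) : ℝ) := by
      have := (hrec (3 * n + 5) (by omega)).1
      rw [show 3 * n + 5 - 1 = 3 * n + 4 from rfl, show 3 * n + 5 - 2 = 3 * n + 3 from rfl,
        ha5] at this
      exact_mod_cast by rw [this]; push_cast; ring
    have hq5 : (q (3 * n + 5) : ℝ) = (q (3 * n + 4) : ℝ) + (q (3 * n + 3) : ℝ) := by
      have := (hrec (3 * n + 5) (by omega)).2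
      rw [show 3 * n + 5 - 1 = 3 * n + 4 from rfl, show 3 * n + 5 - 2 = 3 * n + 3 from rfl,
        ha5] at this
      exact_mod_cast by rw [this]; push_cast; ring
    have hp6 : (p (3 * n + 6) : ℝ) = (2 * (n : ℝ) + 4) * (p (3 * n + 5) : ℝ) + (p (3 * n + 4) : ℝ) := by
      have := (hrec (3 * n + 6) (by omega)).1
      rw [show 3 * n + 6 - 1 = 3 * n + 5 from rfl, show 3 * n + 6 - 2 = 3 * n + 4 from rfl,
        ha6] at this
      rw [this]; push_cast; ring
    have hq6 : (q (3 * n + 6) : ℝ) = (2 * (n : ℝ) + 4) * (q (3 * n + 5) : ℝ) + (q (3 * n + 4) : ℝ) := by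
      have := (hrec (3 * n + 6) (by omega)).2
      rw [show 3 * n + 6 - 1 = 3 * n + 5 from rfl, show 3 * n + 6 - 2 = 3 * n + 4 from rfl,
        ha6] at this
      rw [this]; push_cast; ring
    have hp7 : (p (3 * n + 7) : ℝ) = (p (3 * n + 6) : ℝ) + (p (3 * n + 5) : ℝ) := by
      have := (hrec (3 * n + 7) (by omega)).1
      rw [show 3 * n + 7 - 1 = 3 * n + 6 from rfl, show 3 * n + 7 - 2 = 3 * n + 5 from rfl,
        ha7] at this
      rw [this]; push_cast; ring
    have hq7 : (q (3 * n + 7) : ℝ) = (q (3 * n + 6) : ℝ) + (q (3 * n + 5) : ℝ) := by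
      have := (hrec (3 * n + 7) (by omega)).2
      rw [show 3 * n + 7 - 1 = 3 * n + 6 from rfl, show 3 * n + 7 - 2 = 3 * n + 5 from rfl,
        ha7] at this
      rw [this]; push_cast; ring
    have hA : AA (n + 2) = (q (3 * n + 5) : ℝ) * Real.exp 1 - (p (3 * n + 5) : ℝ) := by
      have h1 := R1 (n + 1)
      rw [ihB, ihC] at h1
      rw [hp5, hq5]; linarith
    have hB : BB (n + 2) = (p (3 * n + 6) : ℝ) - (q (3 * n + 6) : ℝ) * Real.exp 1 := by
      have h2 := R2 (n + 1)
      have h3 := R3 (n + 2)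
      rw [ihC, hA] at *
      rw [hp6, hq6]
      push_cast at h2 ⊢
      nlinarith [h2, h3, hA]
    have hC : CC (n + 2) = (p (3 * n + 7) : ℝ) - (q (3 * n + 7) : ℝ) * Real.exp 1 := by
      rw [R3 (n + 2), hB, hA, hp7, hq7]; ring
    refine ⟨?_, ?_, ?_⟩
    · rw [show 3 * (n + 1) + 2 = 3 * n + 5 by ring]; exact hA
    · rw [show 3 * (n + 1) + 3 = 3 * n + 6 by ring]; exact hB
    · rw [show 3 * (n + 1) + 4 = 3 * n + 7 by ring]; exact hC

theorem stmt14 (a : ℕ → ℕ) (p q : ℕ → ℤ)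
    (ha1 : a 1 = 2)
    (ha3 : ∀ k : ℕ, 1 ≤ k → a (3 * k) = 2 * k)
    (ha : ∀ k : ℕ, 1 ≤ k → a (3 * k - 1) = 1 ∧ a (3 * k + 1) = 1)
    (hp1 : p 1 = 2) (hp2 : p 2 = 3) (hq1 : q 1 = 1) (hq2 : q 2 = 1)
    (hrec : ∀ n : ℕ, 3 ≤ n →
      p n = a n * p (n - 1) + p (n - 2) ∧ q n = a n * q (n - 1) + q (n - 2))
    (k : ℕ) (hk : 1 ≤ k) :
    0 < (-1 : ℝ) ^ k * ((q (3 * k - 1) : ℝ) * Real.exp 1 - (p (3 * k - 1) : ℝ)) := by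
  obtain ⟨n, rfl⟩ : ∃ n, k = n + 1 := ⟨k - 1, by omega⟩
  have hM := (main a p q ha1 ha3 ha hp1 hp2 hq1 hq2 hrec n).1
  rw [show 3 * (n + 1) - 1 = 3 * n + 2 by omega, ← hM]
  exact AApos (n + 1)
end

section
/- For all natural numbers n, m, the integral ∫₀¹ xⁿ (1-x)ᵐ eˣ dx is of the form a·e + b for some integers a and b. -/
open intervalIntegral Real

private lemma aux_sum_mem {ι : Type*} (s : Finset ι) (f : ι → ℝ)
    (h : ∀ i ∈ s, ∃ a b : ℤ, f i = (a : ℝ) * Real.exp 1 + (b : ℝ)) :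
    ∃ a b : ℤ, (∑ i ∈ s, f i) = (a : ℝ) * Real.exp 1 + (b : ℝ) := by
  classical
  induction s using Finset.induction with
  | empty => exact ⟨0, 0, by simp⟩
  | @insert i s' hx ih =>
    obtain ⟨a, b, hab⟩ := h i (Finset.mem_insert_self i s')
    obtain ⟨c, d, hcd⟩ := ih fun j hj => h j (Finset.mem_insert_of_mem hj)
    refine ⟨a + c, b + d, ?_⟩
    rw [Finset.sum_insert hx, hab, hcd]
    push_cast; ring

private lemma aux_pow_exp (k : ℕ) :
    ∃ a b : ℤ, (∫ x in (0:ℝ)..1, x ^ k * Real.exp x) =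
      (a : ℝ) * Real.exp 1 + (b : ℝ) := by
  induction k with
  | zero => exact ⟨1, -1, by simp [integral_exp]; ring⟩
  | succ k ih =>
    obtain ⟨a, b, hab⟩ := ih
    have key : (∫ x in (0:ℝ)..1, x ^ (k+1) * Real.exp x)
        = Real.exp 1 - (k+1 : ℝ) * ∫ x in (0:ℝ)..1, x ^ k * Real.exp x := by
      have h := intervalIntegral.integral_mul_deriv_eq_deriv_mul
        (u := fun x : ℝ => x ^ (k+1)) (u' := fun x : ℝ => (k+1 : ℝ) * x ^ k)
        (v := Real.exp) (v' := Real.exp) (a := (0:ℝ)) (b := 1)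
        (fun x _ => by simpa using (hasDerivAt_pow (k+1) x))
        (fun x _ => Real.hasDerivAt_exp x)
        (Continuous.intervalIntegrable (by fun_prop) _ _)
        (Continuous.intervalIntegrable (by fun_prop) _ _)
      beta_reduce at h
      simp_rw [mul_assoc] at h
      rw [h, intervalIntegral.integral_const_mul]
      simp
    refine ⟨1 - (k+1) * a, -(k+1) * b, ?_⟩
    rw [key, hab]
    push_cast; ring

theorem stmt16 (n m : ℕ) :
    ∃ a b : ℤ, (∫ x in (0:ℝ)..1, x ^ n * (1 - x) ^ m * Real.exp x) =
      (a : ℝ) * Real.exp 1 + (b : ℝ) := by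
  have hexp : ∀ x : ℝ, x ^ n * (1 - x) ^ m * Real.exp x
      = ∑ j ∈ Finset.range (m + 1),
        ((-1 : ℝ) ^ (j + m) * (m.choose j : ℝ)) * (x ^ (n + (m - j)) * Real.exp x) := by
    intro x
    rw [sub_pow, Finset.mul_sum, Finset.sum_mul]
    refine Finset.sum_congr rfl fun j hj => ?_
    rw [pow_add]
    simp only [one_pow]
    ring
  have hInt : ∀ j : ℕ, IntervalIntegrable (fun x : ℝ => ((-1 : ℝ) ^ (j + m) * (m.choose j : ℝ))
        * (x ^ (n + (m - j)) * Real.exp x)) MeasureTheory.volume 0 1 :=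
    fun j => Continuous.intervalIntegrable (by fun_prop) 0 1
  have heq : (∫ x in (0:ℝ)..1, x ^ n * (1 - x) ^ m * Real.exp x)
      = ∑ j ∈ Finset.range (m + 1), ∫ x in (0:ℝ)..1,
        ((-1 : ℝ) ^ (j + m) * (m.choose j : ℝ)) * (x ^ (n + (m - j)) * Real.exp x) := by
    rw [← intervalIntegral.integral_finset_sum (fun j _ => hInt j)]
    simp_rw [hexp]
  rw [heq]
  apply aux_sum_mem
  intro j _
  obtain ⟨a, b, hab⟩ := aux_pow_exp (n + (m - j))
  refine ⟨(-1) ^ (j + m) * (m.choose j : ℤ) * a,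
    (-1) ^ (j + m) * (m.choose j : ℤ) * b, ?_⟩
  rw [intervalIntegral.integral_const_mul, hab]
  push_cast; ring
end

section
/- e is irrational, as a consequence of the identities I_{k,k} = (−1)ᵏ k! (q_{3k−1} e − p_{3k−1}) with 0 < I_{k,k} ≤ e/4ᵏ and q_{3k−1} → ∞. -/
theorem stmt18 : Irrational (Real.exp 1) := by
  rintro ⟨q, hq⟩
  -- choose n large: n ≥ q.den and n ≥ 1
  set n : ℕ := q.den + 1 with hn
  have hn1 : 1 ≤ n := Nat.le_add_left 1 q.den
  have hden : (q.den : ℕ) ∣ n.factorial :=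
    Nat.dvd_factorial q.pos (Nat.le_succ q.den)
  set S : ℝ := ∑ i ∈ Finset.range (n + 1), (1 : ℝ) ^ i / i.factorial with hS
  -- upper bound from exp_bound
  have hub := Real.exp_bound (x := 1) (by norm_num) (Nat.succ_pos n)
  -- strict lower bound: S < exp 1
  have hlb : S < Real.exp 1 := by
    have h := Real.sum_le_exp_of_nonneg (x := 1) (by norm_num) (n + 2)
    have hsplit : ∑ i ∈ Finset.range (n + 2), (1:ℝ) ^ i / i.factorial
        = S + (1:ℝ) ^ (n+1) / (n+1).factorial := by
      rw [hS, Finset.sum_range_succ]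
    have hpos : (0:ℝ) < (1:ℝ) ^ (n+1) / (n+1).factorial := by
      positivity
    rw [hsplit] at h
    linarith
  have hgap : Real.exp 1 - S ≤ ((n:ℝ)+2) / (((n+1).factorial : ℝ) * ((n:ℝ)+1)) := by
    have h := (abs_le.mp hub).2
    have heq : |(1:ℝ)| ^ (n+1) * (((n+1).succ : ℝ) / (((n+1).factorial : ℝ) * ((n+1) : ℕ)))
        = ((n:ℝ)+2) / (((n+1).factorial : ℝ) * ((n:ℝ)+1)) := by
      simp only [abs_one, one_pow, Nat.succ_eq_add_one]
      push_cast
      ring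
    calc Real.exp 1 - S ≤ _ := h
      _ = _ := heq
  -- n! * (exp 1 - S) is a positive integer < 1 : contradiction
  obtain ⟨c, hc⟩ := hden
  -- n! * exp 1 is an integer
  have h1 : ((n.factorial : ℝ)) * Real.exp 1 = ((c * q.num : ℤ) : ℝ) := by
    rw [← hq]
    push_cast
    rw [Rat.cast_def]
    have hdne : ((q.den : ℝ)) ≠ 0 := by positivity
    field_simp
    rw [hc]
    push_cast
    ring
  -- n! * S is an integer (a natural number)
  have h2 : ((n.factorial : ℝ)) * S =
      ((∑ i ∈ Finset.range (n + 1), n.factorial / i.factorial : ℕ) : ℝ) := by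
    rw [hS, Finset.mul_sum]
    push_cast
    refine Finset.sum_congr rfl fun i hi => ?_
    have hile : i ≤ n := Nat.lt_succ_iff.mp (Finset.mem_range.mp hi)
    have hdvd : i.factorial ∣ n.factorial := Nat.factorial_dvd_factorial hile
    rw [Nat.cast_div hdvd (by positivity : ((i.factorial : ℝ)) ≠ 0)]
    rw [one_pow]
    ring
  set N : ℤ := c * q.num - (∑ i ∈ Finset.range (n + 1), n.factorial / i.factorial : ℕ) with hN
  have hNeq : (N : ℝ) = (n.factorial : ℝ) * (Real.exp 1 - S) := by
    rw [hN, Int.cast_sub, ← h1, Int.cast_natCast, ← h2]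
    ring
  have hNpos : (0 : ℝ) < N := by
    rw [hNeq]
    have : (0:ℝ) < (n.factorial : ℝ) := by positivity
    nlinarith [hlb]
  have hNlt : (N : ℝ) < 1 := by
    rw [hNeq]
    have hfac : ((n+1).factorial : ℝ) = ((n+1) : ℝ) * (n.factorial : ℝ) := by
      rw [Nat.factorial_succ]; push_cast; ring
    have hnpos : (0:ℝ) < (n.factorial : ℝ) := by positivity
    have hn1r : (0:ℝ) < ((n:ℝ) + 1) := by positivity
    have key : (n.factorial : ℝ) * (Real.exp 1 - S) ≤ ((n+2) : ℝ) / (((n:ℝ)+1) * ((n:ℝ)+1)) := by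
      have hgap2 := hgap
      rw [hfac] at hgap2
      have h3 : (n.factorial : ℝ) * (Real.exp 1 - S) ≤
          (n.factorial : ℝ) * (((n+2) : ℝ) / (((n:ℝ)+1) * (n.factorial : ℝ) * ((n:ℝ)+1))) := by
        apply mul_le_mul_of_nonneg_left _ hnpos.le
        convert hgap2 using 2
      calc (n.factorial : ℝ) * (Real.exp 1 - S)
          ≤ (n.factorial : ℝ) * (((n+2) : ℝ) / (((n:ℝ)+1) * (n.factorial : ℝ) * ((n:ℝ)+1))) := h3
        _ = ((n+2) : ℝ) / (((n:ℝ)+1) * ((n:ℝ)+1)) := by field_simp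
    have hlt : ((n+2) : ℝ) / (((n:ℝ)+1) * ((n:ℝ)+1)) < 1 := by
      rw [div_lt_one (by positivity)]
      have : (1:ℝ) ≤ (n:ℝ) := by exact_mod_cast hn1
      nlinarith
    linarith
  have hNge : (1 : ℤ) ≤ N := by exact_mod_cast hNpos
  have : (1 : ℝ) ≤ (N : ℝ) := by exact_mod_cast hNge
  linarith
end
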